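/- arXiv:2105.13863 — 2 statements merged into one kernel-verified Lean document; each statement's English description precedes it below -/
import Mathlib

section
/- Let p₁, p₂ be bivariate real polynomials with p₁ nonzero and squarefree and deg p₂ ≤ deg p₁ + 1 (total degrees). Then there exists ε₀ > 0 such that for every real ε with |ε| < ε₀ the polynomial p₁ + ε·p₂ is squarefree. -/
open MvPolynomial

noncomputable section

/-- A node (point) in the plane. -/
abbrev Pt : Type := Fin 2 → ℝ

/-- `p` is an `n`-fundamental polynomial of the node `A` with respect to the node set `X`. -/
def IsFund (n : ℕ) (X : Finset Pt) (A : Pt) (p : MvPolynomial (Fin 2) ℝ) : Prop :=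
  p.totalDegree ≤ n ∧ eval A p = 1 ∧ ∀ B ∈ X, B ≠ A → eval B p = 0

/-- The node set `X` is `n`-independent. -/
def NIndep (n : ℕ) (X : Finset Pt) : Prop := ∀ A ∈ X, ∃ p, IsFund n X A p

/-- `N_m = dim Π_m = (m+1)(m+2)/2`. -/
def Nn (m : ℕ) : ℕ := (m + 1) * (m + 2) / 2

/-- `d(n,k) = N_n - N_{n-k}`. -/
def dnk (n k : ℕ) : ℕ := Nn n - Nn (n - k)

/-- The space `P_{k,X}` of polynomials of total degree at most `k` vanishing on `X`. -/
def PkX (k : ℕ) (X : Finset Pt) : Submodule ℝ (MvPolynomial (Fin 2) ℝ) :=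
  restrictTotalDegree (Fin 2) ℝ k ⊓
    ⨅ A ∈ X, LinearMap.ker (aeval (R := ℝ) (S₁ := ℝ) (A : Fin 2 → ℝ)).toLinearMap


lemma Stmt5Aux.coeff_pderiv (i : Fin 2) (m : Fin 2 →₀ ℕ) (p : MvPolynomial (Fin 2) ℝ) :
    coeff m (pderiv i p) = (m i + 1 : ℝ) * coeff (m + Finsupp.single i 1) p := by
  induction p using MvPolynomial.induction_on' with
  | monomial s a =>
    rw [pderiv_monomial]
    rw [coeff_monomial, coeff_monomial]
    by_cases h : s = m + Finsupp.single i 1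
    · subst h
      have h1 : m + Finsupp.single i 1 - Finsupp.single i 1 = m := by
        ext j; simp [Finsupp.single_apply]
      rw [if_pos h1, if_pos rfl, Finsupp.add_apply, Finsupp.single_eq_same]
      push_cast; ring
    · rw [if_neg h]
      by_cases h2 : s i = 0
      · split <;> simp [h2]
      · have hne : s - Finsupp.single i 1 ≠ m := by
          intro he
          apply h
          ext j
          have hj := DFunLike.congr_fun he j
          rw [Finsupp.tsub_apply] at hj
          rw [Finsupp.add_apply]
          by_cases hij : j = i
          · subst hij
            rw [Finsupp.single_eq_same] at hj ⊢
            omega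
          · rw [Finsupp.single_eq_of_ne' (fun hh => hij hh.symm)] at hj ⊢
            omega
        rw [if_neg hne, mul_zero]
  | add p q hp hq => simp only [map_add, coeff_add, hp, hq]; ring

lemma Stmt5Aux.eq_C_of_pderiv_eq_zero {p : MvPolynomial (Fin 2) ℝ}
    (h : ∀ i, pderiv i p = 0) : ∃ r : ℝ, p = C r := by
  refine ⟨coeff 0 p, ?_⟩
  ext m
  rcases eq_or_ne m 0 with rfl | hm
  · simp
  · rw [coeff_C, if_neg (Ne.symm hm)]
    obtain ⟨i, hi⟩ : ∃ i, m i ≠ 0 := by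
      by_contra hcon
      push_neg at hcon
      exact hm (Finsupp.ext fun j => hcon j)
    have key := Stmt5Aux.coeff_pderiv i (m - Finsupp.single i 1) p
    rw [h i] at key
    have hm' : m - Finsupp.single i 1 + Finsupp.single i 1 = m := by
      ext j
      rw [Finsupp.add_apply, Finsupp.tsub_apply]
      by_cases hij : j = i
      · subst hij; rw [Finsupp.single_eq_same]; omega
      · rw [Finsupp.single_eq_of_ne' (fun hh => hij hh.symm)]; omega
    rw [hm'] at key
    have hpos : (((m - Finsupp.single i 1 : Fin 2 →₀ ℕ)) i + 1 : ℝ) ≠ 0 := by positivity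
    rw [coeff_zero] at key
    exact (mul_eq_zero.mp key.symm).resolve_left hpos

lemma Stmt5Aux.deg_def (s : Fin 2 →₀ ℕ) : (s.sum fun _ e => e) = s.degree := by
  rw [Finsupp.sum, Finsupp.degree]; rfl

lemma Stmt5Aux.degree_add (a b : Fin 2 →₀ ℕ) : (a + b).degree = a.degree + b.degree := by
  simp [Finsupp.degree_eq_weight_one, map_add]

lemma Stmt5Aux.degree_single (i : Fin 2) : (Finsupp.single i 1 : Fin 2 →₀ ℕ).degree = 1 := by
  rw [← Stmt5Aux.deg_def, Finsupp.sum_single_index rfl]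

lemma Stmt5Aux.totalDegree_pderiv_lt {p : MvPolynomial (Fin 2) ℝ} {i : Fin 2}
    (h : pderiv i p ≠ 0) : (pderiv i p).totalDegree < p.totalDegree := by
  have hmem : ∀ m ∈ (pderiv i p).support, m.degree + 1 ≤ p.totalDegree := by
    intro m hm
    rw [MvPolynomial.mem_support_iff] at hm
    rw [Stmt5Aux.coeff_pderiv] at hm
    have hc : coeff (m + Finsupp.single i 1) p ≠ 0 := fun hz => hm (by rw [hz, mul_zero])
    have := MvPolynomial.le_totalDegree (MvPolynomial.mem_support_iff.mpr hc)
    rwa [Stmt5Aux.deg_def, Stmt5Aux.degree_add, Stmt5Aux.degree_single] at this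
  obtain ⟨m₀, hm₀⟩ := (MvPolynomial.support_nonempty.mpr h)
  have hpos : 0 < p.totalDegree := lt_of_lt_of_le (Nat.succ_pos _) (hmem m₀ hm₀)
  rw [MvPolynomial.totalDegree]
  rw [Finset.sup_lt_iff (by exact hpos)]
  intro m hm
  rw [Stmt5Aux.deg_def]
  exact lt_of_lt_of_le (Nat.lt_succ_self _) (hmem m hm)

lemma Stmt5Aux.homComp_mul (a b : MvPolynomial (Fin 2) ℝ) :
    homogeneousComponent (a.totalDegree + b.totalDegree) (a * b) =
      homogeneousComponent a.totalDegree a * homogeneousComponent b.totalDegree b := by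
  classical
  set d := a.totalDegree
  set e := b.totalDegree
  ext m
  rw [coeff_homogeneousComponent, MvPolynomial.coeff_mul, MvPolynomial.coeff_mul]
  have hterm : ∀ uv ∈ Finset.HasAntidiagonal.antidiagonal m,
      coeff uv.1 (homogeneousComponent d a) * coeff uv.2 (homogeneousComponent e b) =
        if uv.1.degree = d ∧ uv.2.degree = e then coeff uv.1 a * coeff uv.2 b else 0 := by
    intro uv _
    rw [coeff_homogeneousComponent, coeff_homogeneousComponent]
    by_cases h1 : uv.1.degree = d <;> by_cases h2 : uv.2.degree = e <;>
      simp [h1, h2]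
  rw [Finset.sum_congr rfl hterm]
  by_cases hm : m.degree = d + e
  · rw [if_pos hm]
    refine Finset.sum_congr rfl fun uv huv => ?_
    rw [Finset.HasAntidiagonal.mem_antidiagonal] at huv
    have hsum : uv.1.degree + uv.2.degree = d + e := by
      rw [← Stmt5Aux.degree_add, huv, hm]
    by_cases h1 : uv.1.degree = d
    · have h2 : uv.2.degree = e := by omega
      rw [if_pos ⟨h1, h2⟩]
    · rw [if_neg (fun hh => h1 hh.1)]
      rcases lt_or_gt_of_ne h1 with hlt | hgt
      · have h2 : e < uv.2.degree := by omega
        have : coeff uv.2 b = 0 := by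
          apply MvPolynomial.coeff_eq_zero_of_totalDegree_lt
          rwa [show (∑ i ∈ uv.2.support, uv.2 i) = uv.2.degree from rfl]
        rw [this, mul_zero]
      · have : coeff uv.1 a = 0 := by
          apply MvPolynomial.coeff_eq_zero_of_totalDegree_lt
          rwa [show (∑ i ∈ uv.1.support, uv.1 i) = uv.1.degree from rfl]
        rw [this, zero_mul]
  · rw [if_neg hm]
    refine (Finset.sum_eq_zero fun uv huv => ?_).symm
    rw [Finset.HasAntidiagonal.mem_antidiagonal] at huv
    refine if_neg fun hh => hm ?_
    rw [← huv, Stmt5Aux.degree_add, hh.1, hh.2]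

lemma Stmt5Aux.totalDegree_le_of_dvd {a b : MvPolynomial (Fin 2) ℝ}
    (h : a ∣ b) (hb : b ≠ 0) : a.totalDegree ≤ b.totalDegree := by
  obtain ⟨t, rfl⟩ := h
  have ha : a ≠ 0 := left_ne_zero_of_mul hb
  have ht : t ≠ 0 := right_ne_zero_of_mul hb
  have hA : homogeneousComponent a.totalDegree a ≠ 0 := by
    obtain ⟨m, hm, hdm⟩ := Finset.exists_mem_eq_sup a.support
      (MvPolynomial.support_nonempty.mpr ha) (fun s => s.sum fun _ e => e)
    intro hz
    have := MvPolynomial.coeff_homogeneousComponent (n := a.totalDegree) (φ := a) m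
    rw [hz, coeff_zero, if_pos (by rw [← Stmt5Aux.deg_def, ← hdm]; rfl)] at this
    exact (MvPolynomial.mem_support_iff.mp hm) this.symm
  have hB : homogeneousComponent t.totalDegree t ≠ 0 := by
    obtain ⟨m, hm, hdm⟩ := Finset.exists_mem_eq_sup t.support
      (MvPolynomial.support_nonempty.mpr ht) (fun s => s.sum fun _ e => e)
    intro hz
    have := MvPolynomial.coeff_homogeneousComponent (n := t.totalDegree) (φ := t) m
    rw [hz, coeff_zero, if_pos (by rw [← Stmt5Aux.deg_def, ← hdm]; rfl)] at this
    exact (MvPolynomial.mem_support_iff.mp hm) this.symm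
  have hAB : homogeneousComponent (a.totalDegree + t.totalDegree) (a * t) ≠ 0 := by
    rw [Stmt5Aux.homComp_mul]; exact mul_ne_zero hA hB
  have hge : ¬ (a * t).totalDegree < a.totalDegree + t.totalDegree := fun hlt =>
    hAB (MvPolynomial.homogeneousComponent_eq_zero _ _ hlt)
  omega

lemma Stmt5Aux.pderiv_eq_zero_of_dvd {a : MvPolynomial (Fin 2) ℝ} {i : Fin 2}
    (h : a ∣ pderiv i a) : pderiv i a = 0 := by
  by_contra hne
  have h1 := Stmt5Aux.totalDegree_le_of_dvd h hne
  have h2 := Stmt5Aux.totalDegree_pderiv_lt hne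
  omega

lemma Stmt5Aux.prop_of_wronskian {p₁ p₂ : MvPolynomial (Fin 2) ℝ} (h1 : p₁ ≠ 0)
    (hw : ∀ i, p₂ * pderiv i p₁ = p₁ * pderiv i p₂) : ∃ c : ℝ, p₂ = c • p₁ := by
  rcases eq_or_ne p₂ 0 with rfl | h2
  · exact ⟨0, by simp⟩
  obtain ⟨a, b, g, hab, hga, hgb⟩ :=
    UniqueFactorizationMonoid.exists_reduced_factors p₁ h1 p₂
  have hg : g ≠ 0 := fun h => h1 (by rw [← hga, h, zero_mul])
  have ha : a ≠ 0 := fun h => h1 (by rw [← hga, h, mul_zero])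
  have key : ∀ i, b * pderiv i a = a * pderiv i b := by
    intro i
    have hh := hw i
    rw [← hga, ← hgb, pderiv_mul, pderiv_mul] at hh
    have h' : (g * g) * (b * pderiv i a) = (g * g) * (a * pderiv i b) := by
      linear_combination hh
    exact mul_left_cancel₀ (mul_ne_zero hg hg) h'
  have hda : ∀ i, pderiv i a = 0 := by
    intro i
    apply Stmt5Aux.pderiv_eq_zero_of_dvd
    have : a ∣ b * pderiv i a := ⟨pderiv i b, key i⟩
    exact hab.dvd_of_dvd_mul_left this
  obtain ⟨α, hα⟩ := Stmt5Aux.eq_C_of_pderiv_eq_zero hda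
  have hdb : ∀ i, pderiv i b = 0 := by
    intro i
    have := key i
    rw [hda i, mul_zero] at this
    exact (mul_eq_zero.mp this.symm).resolve_left ha
  obtain ⟨β, hβ⟩ := Stmt5Aux.eq_C_of_pderiv_eq_zero hdb
  have hαne : α ≠ 0 := by
    intro hz
    apply ha
    rw [hα, hz, map_zero]
  refine ⟨β / α, ?_⟩
  rw [← hga, ← hgb, hα, hβ, MvPolynomial.smul_eq_C_mul]
  have hc : (C (β / α) : MvPolynomial (Fin 2) ℝ) * C α = C β := by
    rw [← map_mul, div_mul_cancel₀ β hαne]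
  linear_combination (-g) * hc

/-- **Proposition 10.** If `p₁` is nonzero and squarefree and `deg p₂ ≤ deg p₁ + 1`, then for
sufficiently small `ε` the polynomial `p₁ + ε p₂` is squarefree. -/
theorem stmt5 (p₁ p₂ : MvPolynomial (Fin 2) ℝ) (hp₁ : p₁ ≠ 0) (hsq : Squarefree p₁)
    (hdeg : p₂.totalDegree ≤ p₁.totalDegree + 1) :
    ∃ ε₀ : ℝ, 0 < ε₀ ∧ ∀ ε : ℝ, |ε| < ε₀ → Squarefree (p₁ + ε • p₂) := by
  classical
  by_cases hc : ∃ c : ℝ, p₂ = c • p₁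
  · obtain ⟨c, rfl⟩ := hc
    refine ⟨(|c| + 1)⁻¹, by positivity, fun ε hε => ?_⟩
    have hcpos : (0:ℝ) < |c| + 1 := by positivity
    have h1a : |ε| * (|c| + 1) < (|c| + 1)⁻¹ * (|c| + 1) :=
      mul_lt_mul_of_pos_right hε hcpos
    rw [inv_mul_cancel₀ (ne_of_gt hcpos)] at h1a
    have habs : |ε * c| < 1 := by
      rw [abs_mul]; nlinarith [abs_nonneg ε, abs_nonneg c]
    have hne : (1 + ε * c) ≠ 0 := by
      have := neg_abs_le (ε * c); intro h; rw [add_eq_zero_iff_eq_neg] at h; nlinarith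
    have heq : p₁ + ε • c • p₁ = C (1 + ε * c) * p₁ := by
      rw [smul_smul, MvPolynomial.smul_eq_C_mul, map_add, map_one]; ring
    rw [heq]
    intro x hx
    refine hsq x (dvd_trans hx ?_)
    have hu : IsUnit (C (1 + ε * c) : MvPolynomial (Fin 2) ℝ) :=
      IsUnit.of_mul_eq_one (C (1 + ε * c)⁻¹)
        (by rw [← map_mul, mul_inv_cancel₀ hne, map_one])
    refine ⟨C (1 + ε * c)⁻¹, ?_⟩
    rw [mul_right_comm, ← map_mul, mul_inv_cancel₀ hne, map_one, one_mul]
  · push_neg at hc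
    obtain ⟨i, hWne⟩ : ∃ i, p₂ * pderiv i p₁ - p₁ * pderiv i p₂ ≠ 0 := by
      by_contra hcon
      push_neg at hcon
      obtain ⟨c, hcc⟩ := Stmt5Aux.prop_of_wronskian hp₁
        (fun i => sub_eq_zero.mp (hcon i))
      exact hc c hcc
    set W : MvPolynomial (Fin 2) ℝ := p₂ * pderiv i p₁ - p₁ * pderiv i p₂ with hWdef
    letI : StrongNormalizationMonoid (MvPolynomial (Fin 2) ℝ) :=
      UniqueFactorizationMonoid.strongNormalizationMonoid
    set B : Set ℝ := {ε | ¬ Squarefree (p₁ + ε • p₂)} with hBdef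
    have hkey : ∀ ε ∈ B, ∃ r ∈ (UniqueFactorizationMonoid.normalizedFactors W).toFinset,
        ∃ q : MvPolynomial (Fin 2) ℝ, Irreducible q ∧ Associated q r ∧
          q * q ∣ p₁ + ε • p₂ := by
      intro ε hε
      have hpne : p₁ + ε • p₂ ≠ 0 := by
        intro hzero
        rcases eq_or_ne ε 0 with rfl | hεne
        · rw [zero_smul, add_zero] at hzero; exact hp₁ hzero
        · refine hc (-ε⁻¹) ?_
          have h2 : ε • p₂ = -p₁ := eq_neg_of_add_eq_zero_right hzero
          rw [← inv_smul_smul₀ hεne p₂, h2, neg_smul, smul_neg]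
      rw [hBdef, Set.mem_setOf_eq, Squarefree] at hε
      push_neg at hε
      obtain ⟨x, hxdvd, hxu⟩ := hε
      have hx0 : x ≠ 0 := by
        rintro rfl
        rw [mul_zero, zero_dvd_iff] at hxdvd
        exact hpne hxdvd
      obtain ⟨q, hqirr, hqdvd⟩ := WfDvdMonoid.exists_irreducible_factor hxu hx0
      have hqq : q * q ∣ p₁ + ε • p₂ := dvd_trans (mul_dvd_mul hqdvd hqdvd) hxdvd
      have hq1 : q ∣ p₁ + ε • p₂ := dvd_trans (dvd_mul_right q q) hqq
      have hq2 : q ∣ pderiv i (p₁ + ε • p₂) := by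
        obtain ⟨r, hr⟩ := hqq
        rw [hr, pderiv_mul, pderiv_mul]
        refine dvd_add (dvd_mul_of_dvd_left ?_ r) (dvd_mul_of_dvd_left (dvd_mul_right q q) _)
        exact dvd_add (dvd_mul_left q _) (dvd_mul_right q _)
      have hqW : q ∣ W := by
        have hWeq : W = p₂ * pderiv i (p₁ + ε • p₂) - pderiv i p₂ * (p₁ + ε • p₂) := by
          rw [hWdef, map_add, (pderiv i).map_smul, MvPolynomial.smul_eq_C_mul,
            MvPolynomial.smul_eq_C_mul]
          ring
        rw [hWeq]
        exact dvd_sub (Dvd.dvd.mul_left hq2 p₂) (Dvd.dvd.mul_left hq1 (pderiv i p₂))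
      obtain ⟨r, hrmem, hrass⟩ :=
        UniqueFactorizationMonoid.exists_mem_normalizedFactors_of_dvd hWne hqirr hqW
      exact ⟨r, Multiset.mem_toFinset.mpr hrmem, q, hqirr, hrass, hqq⟩
    choose rfun hrmem qfun hqirr hqass hqdvd using hkey
    have hinj : Set.InjOn (fun ε => if h : ε ∈ B then rfun ε h else 1) B := by
      intro ε₁ h₁ ε₂ h₂ hfe
      by_contra hne
      simp only [dif_pos h₁, dif_pos h₂] at hfe
      have hre : rfun ε₁ h₁ = rfun ε₂ h₂ := hfe
      have hass : Associated (qfun ε₁ h₁) (qfun ε₂ h₂) :=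
        (hqass ε₁ h₁).trans (by rw [hre]; exact (hqass ε₂ h₂).symm)
      have hdvd2 : qfun ε₁ h₁ * qfun ε₁ h₁ ∣ p₁ + ε₂ • p₂ :=
        dvd_trans (hass.mul_mul hass).dvd (hqdvd ε₂ h₂)
      have hdvdsub : qfun ε₁ h₁ * qfun ε₁ h₁ ∣ (ε₁ - ε₂) • p₂ := by
        have hsub : (p₁ + ε₁ • p₂) - (p₁ + ε₂ • p₂) = (ε₁ - ε₂) • p₂ := by
          rw [sub_smul]; abel
        rw [← hsub]
        exact dvd_sub (hqdvd ε₁ h₁) hdvd2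
      have hεne : (ε₁ - ε₂) ≠ 0 := sub_ne_zero.mpr hne
      have hdvdp2 : qfun ε₁ h₁ * qfun ε₁ h₁ ∣ p₂ := by
        rw [MvPolynomial.smul_eq_C_mul] at hdvdsub
        refine dvd_trans ?_ (dvd_trans hdvdsub ?_)
        · exact dvd_refl _
        · refine (associated_unit_mul_left p₂ _ ?_).dvd
          exact IsUnit.of_mul_eq_one (C (ε₁ - ε₂)⁻¹)
            (by rw [← map_mul, mul_inv_cancel₀ hεne, map_one])
      have hdvdp1 : qfun ε₁ h₁ * qfun ε₁ h₁ ∣ p₁ := by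
        have h3 : qfun ε₁ h₁ * qfun ε₁ h₁ ∣ ε₁ • p₂ := by
          rw [MvPolynomial.smul_eq_C_mul]
          exact Dvd.dvd.mul_left hdvdp2 _
        have h4 := dvd_sub (hqdvd ε₁ h₁) h3
        rwa [add_sub_cancel_right] at h4
      exact (hqirr ε₁ h₁).not_isUnit (hsq _ hdvdp1)
    have hBfin : B.Finite := by
      refine Set.Finite.of_finite_image ?_ hinj
      refine Set.Finite.subset
        ((UniqueFactorizationMonoid.normalizedFactors W).toFinset.finite_toSet) ?_
      rintro y ⟨ε, hε, rfl⟩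
      simp only [dif_pos hε]
      exact hrmem ε hε
    have h0 : (0:ℝ) ∈ Bᶜ := by
      simp only [hBdef, Set.mem_compl_iff, Set.mem_setOf_eq, not_not, zero_smul, add_zero]
      exact hsq
    obtain ⟨δ, hδpos, hδ⟩ := Metric.isOpen_iff.mp hBfin.isClosed.isOpen_compl 0 h0
    refine ⟨δ, hδpos, fun ε hε => ?_⟩
    have hmem : ε ∈ Bᶜ := hδ (by simpa [Real.dist_eq] using hε)
    simpa [hBdef, Set.mem_compl_iff, Set.mem_setOf_eq, not_not] using hmem
end
end

section
/- Let k ≤ n and let X ⊂ ℝ² be an n-independent node set with #X = d(n,k−1)+2 all of whose nodes lie on a curve of degree k. Then this curve is uniquely determined by the nodes: any two polynomials of total degree ≤ k vanishing at all the nodes of X are linearly dependent (equivalently, dim P_{k,X} ≤ 1). -/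
open MvPolynomial

noncomputable section
set_option maxHeartbeats 1000000
set_option synthInstance.maxHeartbeats 400000

lemma Nn_succ (m : ℕ) : Nn (m+1) = Nn m + (m+2) := by
  unfold Nn
  have h : (m + 1 + 1) * (m + 1 + 2) = (m+1)*(m+2) + (m+2)*2 := by ring
  rw [h, Nat.add_mul_div_right _ _ (by norm_num : (0:ℕ) < 2)]

lemma Nn_eq_sum (m : ℕ) : Nn m = ∑ i ∈ Finset.range (m+1), (i+1) := by
  induction m with
  | zero => simp [Nn]
  | succ m ih => rw [Nn_succ, Finset.sum_range_succ, ih]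

lemma Nn_mono : Monotone Nn :=
  monotone_nat_of_le_succ (fun i => by rw [Nn_succ]; omega)

lemma fsum_eq (s : Fin 2 →₀ ℕ) : (s.sum fun _ e => e) = s 0 + s 1 := by
  rw [Finsupp.sum_fintype _ _ (fun _ => rfl)]
  exact Fin.sum_univ_two _

/-- The index type of the basis of `restrictTotalDegree`. -/
abbrev IdxT (m : ℕ) : Type := {s : Fin 2 →₀ ℕ // s ∈ {n : Fin 2 →₀ ℕ | (n.sum fun _ e => e) ≤ m}}

def idxEquiv (m : ℕ) : IdxT m ≃ (Σ d : Fin (m+1), Fin (d.1+1)) where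
  toFun s := ⟨⟨s.1 0 + s.1 1, by
      have := s.2
      simp only [Set.mem_setOf_eq, fsum_eq] at this
      omega⟩, ⟨s.1 0, Nat.lt_succ_of_le (Nat.le_add_right _ _)⟩⟩
  invFun di := ⟨Finsupp.equivFunOnFinite.symm ![di.2.1, di.1.1 - di.2.1], by
      have h2 := di.2.2
      have h1 := di.1.2
      simp only [Set.mem_setOf_eq, fsum_eq, Finsupp.coe_equivFunOnFinite_symm,
        Matrix.cons_val_zero, Matrix.cons_val_one, Matrix.head_cons]
      omega⟩
  left_inv s := by
    ext i : 2
    simp only [Finsupp.coe_equivFunOnFinite_symm]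
    fin_cases i <;> simp
  right_inv di := by
    obtain ⟨⟨d, hd⟩, ⟨i, hi⟩⟩ := di
    simp only [Finsupp.coe_equivFunOnFinite_symm, Matrix.cons_val_zero,
      Matrix.cons_val_one, Matrix.head_cons] at hi ⊢
    have h1 : i + (d - i) = d := by omega
    refine Sigma.ext (by simpa using Fin.ext h1) ?_
    rw [Fin.heq_ext_iff (by simp; omega)]

instance (m : ℕ) : Fintype (IdxT m) := Fintype.ofEquiv _ (idxEquiv m).symm

lemma card_idx (m : ℕ) : Fintype.card (IdxT m) = Nn m := by
  rw [Fintype.card_congr (idxEquiv m), Fintype.card_sigma]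
  simp only [Fintype.card_fin]
  rw [Fin.sum_univ_eq_sum_range (fun i => i + 1), Nn_eq_sum]

lemma finrank_restrict (m : ℕ) :
    Module.finrank ℝ (restrictTotalDegree (Fin 2) ℝ m) = Nn m := by
  have : Module.finrank ℝ
      (restrictSupport ℝ {n : Fin 2 →₀ ℕ | (n.sum fun _ e => e) ≤ m}) = Nn m := by
    rw [Module.finrank_eq_card_basis
      (basisRestrictSupport ℝ {n : Fin 2 →₀ ℕ | (n.sum fun _ e => e) ≤ m})]
    exact card_idx m
  exact this


lemma coeff_zero_of_deg_gt {f : (MvPolynomial (Fin 2) ℝ)} {d : Fin 2 →₀ ℕ} (h : f.totalDegree < d.degree) :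
    coeff d f = 0 := by
  by_contra hc
  exact absurd (le_totalDegree (mem_support_iff.mpr hc)) (not_le.mpr h)

lemma degree_sum_eq (d : Fin 2 →₀ ℕ) : d.degree = d.sum fun _ e => e := rfl

lemma degree_add (u v : Fin 2 →₀ ℕ) : (u + v).degree = u.degree + v.degree := by
  rw [degree_sum_eq, degree_sum_eq, degree_sum_eq,
    Finsupp.sum_add_index' (fun _ => rfl) (fun _ _ _ => rfl)]

lemma exists_top_monomial {f : (MvPolynomial (Fin 2) ℝ)} (hf : f ≠ 0) :
    ∃ d ∈ f.support, d.degree = f.totalDegree := by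
  obtain ⟨d, hd, he⟩ := Finset.exists_mem_eq_sup f.support
    (support_nonempty.mpr hf) (fun s => s.sum fun _ e => e)
  exact ⟨d, hd, by rw [degree_sum_eq, ← he]; rfl⟩

lemma hc_top_ne_zero {f : (MvPolynomial (Fin 2) ℝ)} (hf : f ≠ 0) :
    homogeneousComponent f.totalDegree f ≠ 0 := by
  obtain ⟨d, hd, he⟩ := exists_top_monomial hf
  intro h0
  have := coeff_homogeneousComponent (φ := f) f.totalDegree d
  rw [h0, if_pos he] at this
  exact mem_support_iff.mp hd this.symm

lemma hc_mul_top {f g : (MvPolynomial (Fin 2) ℝ)} (hf : f.totalDegree ≤ a) (hg : g.totalDegree ≤ b) :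
    homogeneousComponent (a + b) (f * g) =
      homogeneousComponent a f * homogeneousComponent b g := by
  apply MvPolynomial.ext
  intro d
  classical
  rw [coeff_homogeneousComponent, coeff_mul, coeff_mul]
  by_cases hd : d.degree = a + b
  · rw [if_pos hd]
    refine Finset.sum_congr rfl (fun x hx => ?_)
    have hxy : x.1 + x.2 = d := Finset.HasAntidiagonal.mem_antidiagonal.mp hx
    have hdeg : x.1.degree + x.2.degree = a + b := by
      rw [← degree_add, hxy, hd]
    rw [coeff_homogeneousComponent, coeff_homogeneousComponent]
    by_cases h1 : x.1.degree = a
    · rw [if_pos h1, if_pos (by omega : x.2.degree = b)]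
    · rw [if_neg h1, zero_mul]
      rcases Nat.lt_or_ge a x.1.degree with hlt | hge
      · rw [coeff_zero_of_deg_gt (lt_of_le_of_lt hf hlt), zero_mul]
      · have : b < x.2.degree := by omega
        rw [coeff_zero_of_deg_gt (lt_of_le_of_lt hg this), mul_zero]
  · rw [if_neg hd]
    refine (Finset.sum_eq_zero (fun x hx => ?_)).symm
    have hxy : x.1 + x.2 = d := Finset.HasAntidiagonal.mem_antidiagonal.mp hx
    rw [coeff_homogeneousComponent, coeff_homogeneousComponent]
    by_cases h1 : x.1.degree = a
    · have h2 : x.2.degree ≠ b := by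
        intro h2
        exact hd (by rw [← hxy, degree_add, h1, h2])
      rw [if_neg h2, mul_zero]
    · rw [if_neg h1, zero_mul]

lemma totalDegree_mul_eq {f g : (MvPolynomial (Fin 2) ℝ)} (hf : f ≠ 0) (hg : g ≠ 0) :
    (f * g).totalDegree = f.totalDegree + g.totalDegree := by
  refine le_antisymm (totalDegree_mul f g) ?_
  by_contra hlt
  have h := hc_mul_top (le_refl f.totalDegree) (le_refl g.totalDegree)
  rw [homogeneousComponent_eq_zero _ _ (not_le.mp hlt)] at h
  exact mul_ne_zero (hc_top_ne_zero hf) (hc_top_ne_zero hg) h.symm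

lemma deg_le_of_dvd {f x : (MvPolynomial (Fin 2) ℝ)} (h : f ∣ x) (hx : x ≠ 0) :
    f.totalDegree ≤ x.totalDegree := by
  obtain ⟨t, rfl⟩ := h
  have hf : f ≠ 0 := fun h0 => hx (by rw [h0, zero_mul])
  have ht : t ≠ 0 := fun h0 => hx (by rw [h0, mul_zero])
  rw [totalDegree_mul_eq hf ht]
  omega

lemma isUnit_deg_zero {u : (MvPolynomial (Fin 2) ℝ)} (h : IsUnit u) : u.totalDegree = 0 := by
  obtain ⟨v, hv⟩ := h.exists_right_inv
  have hu : u ≠ 0 := left_ne_zero_of_mul_eq_one hv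
  have hvne : v ≠ 0 := right_ne_zero_of_mul_eq_one hv
  have := totalDegree_mul_eq hu hvne
  rw [hv, totalDegree_one] at this
  omega

lemma assoc_deg_eq {f g : (MvPolynomial (Fin 2) ℝ)} (h : Associated f g) : f.totalDegree = g.totalDegree := by
  rcases eq_or_ne f 0 with rfl | hf
  · rw [(associated_zero_iff_eq_zero g).mp h.symm]
  obtain ⟨u, hu⟩ := h
  rw [← hu, totalDegree_mul_eq hf (Units.ne_zero u), isUnit_deg_zero u.isUnit]
  omega

lemma eq_C_of_deg_zero {f : (MvPolynomial (Fin 2) ℝ)} (h : f.totalDegree = 0) : ∃ c : ℝ, f = C c := by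
  refine ⟨f.coeff 0, MvPolynomial.ext _ _ (fun d => ?_)⟩
  rcases eq_or_ne d 0 with rfl | hd
  · simp
  · rw [coeff_zero_of_deg_gt (by
      rw [h]
      exact Nat.pos_of_ne_zero (fun h0 => hd ((Finsupp.degree_eq_zero_iff d).mp h0))),
      coeff_C, if_neg (Ne.symm hd)]





lemma aeval_eq_eval (A : Pt) (p : (MvPolynomial (Fin 2) ℝ)) : aeval (R := ℝ) (S₁ := ℝ) A p = eval A p := by
  rw [aeval_def, Algebra.algebraMap_self]
  rfl

lemma mem_PkX {k : ℕ} {X : Finset Pt} {p : (MvPolynomial (Fin 2) ℝ)} :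
    p ∈ PkX k X ↔ p.totalDegree ≤ k ∧ ∀ A ∈ X, eval A p = 0 := by
  simp only [PkX, Submodule.mem_inf, Submodule.mem_iInf, LinearMap.mem_ker,
    AlgHom.toLinearMap_apply, mem_restrictTotalDegree, aeval_eq_eval]

lemma PkX_le_restrict {k : ℕ} {X : Finset Pt} :
    PkX k X ≤ restrictTotalDegree (Fin 2) ℝ k :=
  fun _ hp => (mem_restrictTotalDegree _ _ _).mpr (mem_PkX.mp hp).1

instance PkX_fd (k : ℕ) (X : Finset Pt) : FiniteDimensional ℝ (PkX k X) :=
  Submodule.finiteDimensional_of_le PkX_le_restrict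

lemma finrank_le_of_le {p q : Submodule ℝ (MvPolynomial (Fin 2) ℝ)} (h : p ≤ q) [FiniteDimensional ℝ q] :
    Module.finrank ℝ p ≤ Module.finrank ℝ q := by
  have h2 := Submodule.finrank_le (Submodule.comap q.subtype p)
  rwa [(Submodule.comapSubtypeEquivOfLe h).finrank_eq] at h2

lemma finrank_PkX_card {n : ℕ} {X : Finset Pt} (hind : NIndep n X) :
    Module.finrank ℝ (PkX n X) + X.card = Nn n := by
  classical
  set E : restrictTotalDegree (Fin 2) ℝ n →ₗ[ℝ] ({A // A ∈ X} → ℝ) :=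
    LinearMap.pi (fun A => ((aeval (R := ℝ) (S₁ := ℝ) (A.1 : Fin 2 → ℝ)).toLinearMap).comp
      (Submodule.subtype _)) with hE
  have hsur : Function.Surjective E := by
    rw [← LinearMap.range_eq_top, ← top_le_iff, ← (Pi.basisFun ℝ {A // A ∈ X}).span_eq,
      Submodule.span_le]
    rintro v ⟨A, rfl⟩
    obtain ⟨f, hdeg, h1, h0⟩ := hind A.1 A.2
    refine ⟨⟨f, (mem_restrictTotalDegree _ _ _).mpr hdeg⟩, ?_⟩
    funext B
    simp only [hE, LinearMap.pi_apply, LinearMap.comp_apply, Submodule.subtype_apply,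
      AlgHom.toLinearMap_apply, aeval_eq_eval, Pi.basisFun_apply]
    by_cases hBA : B = A
    · subst hBA
      rw [Pi.single_eq_same]
      exact h1
    · rw [Pi.single_eq_of_ne hBA]
      exact h0 B.1 B.2 (fun h => hBA (Subtype.ext h))
  have hker : LinearMap.ker E = Submodule.comap (restrictTotalDegree (Fin 2) ℝ n).subtype
      (PkX n X) := by
    ext x
    simp only [LinearMap.mem_ker, Submodule.mem_comap, Submodule.subtype_apply, hE,
      funext_iff, LinearMap.pi_apply, LinearMap.comp_apply, AlgHom.toLinearMap_apply,
      Pi.zero_apply, mem_PkX, aeval_eq_eval]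
    constructor
    · intro h
      exact ⟨(mem_restrictTotalDegree _ _ _).mp x.2, fun A hA => h ⟨A, hA⟩⟩
    · intro h A
      exact h.2 A.1 A.2
  have h1 := LinearMap.finrank_range_add_finrank_ker E
  have h2 : Module.finrank ℝ (LinearMap.range E) = X.card := by
    rw [LinearMap.range_eq_top.mpr hsur, finrank_top, Module.finrank_fintype_fun_eq_card,
      Fintype.card_coe]
  have h3 : Module.finrank ℝ (LinearMap.ker E) = Module.finrank ℝ (PkX n X) := by
    rw [hker]
    exact LinearEquiv.finrank_eq
      (Submodule.comapSubtypeEquivOfLe (PkX_le_restrict (k := n) (X := X)))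
  rw [h2, h3, finrank_restrict] at h1
  omega

def mulMap (f : (MvPolynomial (Fin 2) ℝ)) : (MvPolynomial (Fin 2) ℝ) →ₗ[ℝ] (MvPolynomial (Fin 2) ℝ) := LinearMap.mulLeft ℝ f

lemma mulMap_apply (f x : (MvPolynomial (Fin 2) ℝ)) : mulMap f x = f * x := rfl

lemma mulMap_inj {f : (MvPolynomial (Fin 2) ℝ)} (hf : f ≠ 0) : Function.Injective (mulMap f) :=
  fun _ _ h => mul_left_cancel₀ hf h

instance mulMap_fd (f : (MvPolynomial (Fin 2) ℝ)) (m : ℕ) :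
    FiniteDimensional ℝ (Submodule.map (mulMap f) (restrictTotalDegree (Fin 2) ℝ m)) :=
  Module.Finite.map _ _

lemma finrank_mulMap_map {f : (MvPolynomial (Fin 2) ℝ)} (hf : f ≠ 0) (m : ℕ) :
    Module.finrank ℝ (Submodule.map (mulMap f) (restrictTotalDegree (Fin 2) ℝ m)) = Nn m := by
  rw [← finrank_restrict m]
  exact ((Submodule.equivMapOfInjective _ (mulMap_inj hf) _).symm).finrank_eq

lemma map_le_PkX {f : (MvPolynomial (Fin 2) ℝ)} {X : Finset Pt} (hvan : ∀ A ∈ X, eval A f = 0) {m n' : ℕ}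
    (h : f.totalDegree + m ≤ n') :
    Submodule.map (mulMap f) (restrictTotalDegree (Fin 2) ℝ m) ≤ PkX n' X := by
  rintro x ⟨r, hr, rfl⟩
  have hr' := (mem_restrictTotalDegree _ _ _).mp hr
  refine mem_PkX.mpr ⟨?_, fun A hA => ?_⟩
  · show (f * r).totalDegree ≤ n'
    exact le_trans (totalDegree_mul f r) (by omega)
  · show eval A (f * r) = 0
    rw [map_mul, hvan A hA, zero_mul]


/-- **Theorem 1.** An `n`-independent set of `d(n,k-1)+2` nodes lying in a curve of degree
`k ≤ n` determines the curve uniquely. -/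
theorem stmt12 (n k : ℕ) (hk : 1 ≤ k) (hkn : k ≤ n) (X : Finset Pt)
    (hind : NIndep n X) (hcard : X.card = dnk n (k - 1) + 2)
    (q : MvPolynomial (Fin 2) ℝ) (hq : q ≠ 0) (hqdeg : q.totalDegree = k)
    (hqvan : ∀ A ∈ X, eval A q = 0) :
    Module.finrank ℝ (PkX k X) ≤ 1 := by
  classical
  obtain ⟨m, hkm⟩ : ∃ m, k + m = n := ⟨n - k, by omega⟩
  have hdim := finrank_PkX_card hind
  have hmono : Nn (m+1) ≤ Nn n := Nn_mono (by omega)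
  have hd : dnk n (k-1) = Nn n - Nn (m+1) := by
    unfold dnk
    congr 2
    omega
  have hPn : Module.finrank ℝ (PkX n X) + 2 = Nn (m + 1) := by
    rw [hcard, hd] at hdim
    omega
  have hlow : ∀ f : (MvPolynomial (Fin 2) ℝ), f ≠ 0 → f.totalDegree ≤ k → (∀ A ∈ X, eval A f = 0) →
      f.totalDegree = k := by
    intro f hf hfd hfv
    by_contra hne
    have hle : Submodule.map (mulMap f) (restrictTotalDegree (Fin 2) ℝ (m+1)) ≤ PkX n X :=
      map_le_PkX hfv (by omega)
    have h2 := finrank_le_of_le hle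
    rw [finrank_mulMap_map hf] at h2
    omega
  have hspan : PkX k X ≤ Submodule.span ℝ {q} := by
    intro p hp
    obtain ⟨hpdeg, hpvan⟩ := mem_PkX.mp hp
    rcases eq_or_ne p 0 with rfl | hp0
    · exact Submodule.zero_mem _
    rw [Submodule.mem_span_singleton]
    have hpk : p.totalDegree = k := hlow p hp0 hpdeg hpvan
    by_cases hpq : p ∣ q
    · obtain ⟨h, rfl⟩ := hpq
      have hh : h ≠ 0 := right_ne_zero_of_mul hq
      have hdh : h.totalDegree = 0 := by
        have := totalDegree_mul_eq hp0 hh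
        omega
      obtain ⟨c, rfl⟩ := eq_C_of_deg_zero hdh
      have hc : c ≠ 0 := fun h0 => hq (by rw [h0, C_0, mul_zero])
      refine ⟨c⁻¹, ?_⟩
      rw [smul_eq_C_mul]
      calc C c⁻¹ * (p * C c) = p * (C c⁻¹ * C c) := by ring
      _ = p := by rw [← C_mul, inv_mul_cancel₀ hc, C_1, mul_one]
    by_cases hqp : q ∣ p
    · obtain ⟨h, rfl⟩ := hqp
      have hh : h ≠ 0 := right_ne_zero_of_mul hp0
      have hdh : h.totalDegree = 0 := by
        have := totalDegree_mul_eq hq hh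
        omega
      obtain ⟨c, rfl⟩ := eq_C_of_deg_zero hdh
      exact ⟨c, by rw [smul_eq_C_mul]; ring⟩
    exfalso
    letI : NormalizationMonoid (MvPolynomial (Fin 2) ℝ) := UniqueFactorizationMonoid.normalizationMonoid.toNormalizationMonoid
    letI : GCDMonoid (MvPolynomial (Fin 2) ℝ) := UniqueFactorizationMonoid.toGCDMonoid (MvPolynomial (Fin 2) ℝ)
    have hg0 : gcd p q ≠ 0 := fun h0 => hp0 ((gcd_eq_zero_iff p q).mp h0).1
    have hl0 : lcm p q ≠ 0 := fun h0 => by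
      rcases (lcm_eq_zero_iff p q).mp h0 with h | h
      exacts [hp0 h, hq h]
    have hsum_deg : (gcd p q).totalDegree + (lcm p q).totalDegree = k + k := by
      have h1 := assoc_deg_eq (gcd_mul_lcm p q)
      rw [totalDegree_mul_eq hg0 hl0, totalDegree_mul_eq hp0 hq, hpk, hqdeg] at h1
      omega
    have hgk : (gcd p q).totalDegree ≤ k := by
      have := deg_le_of_dvd (gcd_dvd_left p q) hp0
      omega
    have hgne : (gcd p q).totalDegree ≠ k := by
      intro hgk'
      obtain ⟨u, hu⟩ := gcd_dvd_left p q
      have hu0 : u ≠ 0 := fun h0 => hp0 (by rw [hu, h0, mul_zero])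
      have hdu : u.totalDegree = 0 := by
        have h2 := totalDegree_mul_eq hg0 hu0
        rw [← hu, hpk] at h2
        omega
      obtain ⟨c, rfl⟩ := eq_C_of_deg_zero hdu
      have hc : c ≠ 0 := fun h0 => hp0 (by rw [hu, h0, C_0, mul_zero])
      refine hpq (dvd_trans ?_ (gcd_dvd_right p q))
      refine ⟨C c⁻¹, ?_⟩
      calc gcd p q = gcd p q * (C c * C c⁻¹) := by
            rw [← C_mul, mul_inv_cancel₀ hc, C_1, mul_one]
      _ = gcd p q * C c * C c⁻¹ := by ring
      _ = p * C c⁻¹ := by rw [← hu]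
    have hlk : k + 1 ≤ (lcm p q).totalDegree := by omega
    have hSp_le : Submodule.map (mulMap p) (restrictTotalDegree (Fin 2) ℝ m) ≤ PkX n X :=
      map_le_PkX hpvan (by omega)
    have hSq_le : Submodule.map (mulMap q) (restrictTotalDegree (Fin 2) ℝ m) ≤ PkX n X :=
      map_le_PkX hqvan (by omega)
    have hsup := finrank_le_of_le (sup_le hSp_le hSq_le)
    have hrk := Submodule.finrank_sup_add_finrank_inf_eq
      (Submodule.map (mulMap p) (restrictTotalDegree (Fin 2) ℝ m))
      (Submodule.map (mulMap q) (restrictTotalDegree (Fin 2) ℝ m))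
    rw [finrank_mulMap_map hp0, finrank_mulMap_map hq] at hrk
    have key : ∀ x, x ∈ (Submodule.map (mulMap p) (restrictTotalDegree (Fin 2) ℝ m)) ⊓
        (Submodule.map (mulMap q) (restrictTotalDegree (Fin 2) ℝ m)) →
        ∃ t : (MvPolynomial (Fin 2) ℝ), x = lcm p q * t ∧
          (t ≠ 0 → (lcm p q).totalDegree + t.totalDegree ≤ k + m) := by
      intro x hx
      obtain ⟨hx1, hx2⟩ := Submodule.mem_inf.mp hx
      obtain ⟨r, hr, hxr⟩ := Submodule.mem_map.mp hx1
      obtain ⟨s, hs, hxs⟩ := Submodule.mem_map.mp hx2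
      have hlx : lcm p q ∣ x := lcm_dvd ⟨r, hxr.symm⟩ ⟨s, hxs.symm⟩
      obtain ⟨t, rfl⟩ := hlx
      refine ⟨t, rfl, fun ht => ?_⟩
      have hdx : (lcm p q * t).totalDegree ≤ k + m := by
        rw [← hxr, mulMap_apply]
        refine le_trans (totalDegree_mul p r) ?_
        have := (mem_restrictTotalDegree _ _ _).mp hr
        omega
      rw [totalDegree_mul_eq hl0 ht] at hdx
      exact hdx
    rcases Nat.eq_zero_or_pos m with hm0 | hmpos
    · have hbot : (Submodule.map (mulMap p) (restrictTotalDegree (Fin 2) ℝ m)) ⊓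
          (Submodule.map (mulMap q) (restrictTotalDegree (Fin 2) ℝ m)) = ⊥ := by
        rw [eq_bot_iff]
        intro x hx
        obtain ⟨t, rfl, hdeg⟩ := key x hx
        rcases eq_or_ne t 0 with rfl | ht
        · rw [mul_zero]
          exact Submodule.zero_mem _
        · have := hdeg ht
          omega
      rw [hbot, finrank_bot] at hrk
      have hN0 : Nn m = 1 := by rw [hm0]; rfl
      have hN1 : Nn (m+1) = 3 := by rw [hm0]; rfl
      omega
    · have hinf_le : (Submodule.map (mulMap p) (restrictTotalDegree (Fin 2) ℝ m)) ⊓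
          (Submodule.map (mulMap q) (restrictTotalDegree (Fin 2) ℝ m)) ≤
          Submodule.map (mulMap (lcm p q)) (restrictTotalDegree (Fin 2) ℝ (m-1)) := by
        intro x hx
        obtain ⟨t, rfl, hdeg⟩ := key x hx
        rcases eq_or_ne t 0 with rfl | ht
        · rw [mul_zero]
          exact Submodule.zero_mem _
        · refine ⟨t, (mem_restrictTotalDegree _ _ _).mpr ?_, rfl⟩
          have := hdeg ht
          omega
      have hinf := (finrank_le_of_le hinf_le).trans
        (le_of_eq (finrank_mulMap_map hl0 (m-1)))
      have e1 := Nn_succ (m-1)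
      have e2 := Nn_succ m
      have e3 : m - 1 + 1 = m := by omega
      rw [e3] at e1
      omega
  have hle1 := finrank_le_of_le hspan
  rwa [finrank_span_singleton hq] at hle1
end
end
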